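/- Let y₁,…,y_m ∈ ℂ be pairwise distinct points with Im(y_j) > 0, and A₁,…,A_m ∈ ℂ³. If the function x ↦ Σ_j A_j/(x - y_j)^{3/2} vanishes identically on an open real interval, then A_j = 0 for all j. -/

import Mathlib

open Complex Finset

private lemma slit_aux {y : ℂ} (hy : 0 < y.im) (x : ℝ) : (x : ℂ) - y ∈ Complex.slitPlane := by
  rw [Complex.mem_slitPlane_iff]
  right
  simp only [Complex.sub_im, Complex.ofReal_im, zero_sub]
  exact ne_of_lt (neg_lt_zero.mpr hy)

private lemma ne_zero_aux {y : ℂ} (hy : 0 < y.im) (x : ℝ) : (x : ℂ) - y ≠ 0 :=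
  Complex.slitPlane_ne_zero (slit_aux hy x)

private lemma scalar_vanishing
    (m : ℕ) (y : Fin m → ℂ) (hy : Function.Injective y) (hyim : ∀ j, 0 < (y j).im)
    (c : Fin m → ℂ) (a b : ℝ) (hab : a < b)
    (h : ∀ x ∈ Set.Ioo a b, ∑ j, ((x : ℂ) - y j) ^ (-(3 / 2) : ℂ) * c j = 0) :
    ∀ j, c j = 0 := by
  set e : ℂ := -(3 / 2) with he
  set F : ℝ → ℂ := fun x => ∑ j, ((x : ℂ) - y j) ^ e * c j with hF
  -- iterated derivatives of F on the interval
  have key : ∀ n : ℕ, ∀ x ∈ Set.Ioo a b,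
      iteratedDeriv n F x
        = ∑ j, (∏ i ∈ range n, (e - i)) * (((x : ℂ) - y j) ^ (e - n)) * c j := by
    intro n
    induction n with
    | zero =>
        intro x hx
        simp [hF]
    | succ n ih =>
        intro x hx
        rw [iteratedDeriv_succ]
        have hev : iteratedDeriv n F =ᶠ[nhds x]
            fun t => ∑ j, (∏ i ∈ range n, (e - i)) * (((t : ℂ) - y j) ^ (e - n)) * c j := by
          filter_upwards [isOpen_Ioo.mem_nhds hx] with t ht
          exact ih t ht
        rw [hev.deriv_eq]
        have hder : HasDerivAt
            (fun t : ℝ => ∑ j, (∏ i ∈ range n, (e - i)) * (((t : ℂ) - y j) ^ (e - n)) * c j)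
            (∑ j, (∏ i ∈ range n, (e - i)) * ((e - n) * ((x : ℂ) - y j) ^ (e - n - 1) * 1) * c j)
            x := by
          apply HasDerivAt.fun_sum
          intro j _
          have h1 : HasDerivAt (fun z : ℂ => (z - y j) ^ (e - n))
              ((e - n) * ((x : ℂ) - y j) ^ (e - n - 1) * 1) (x : ℂ) :=
            (((hasDerivAt_id ((x : ℂ))).sub_const (y j)).cpow_const (slit_aux (hyim j) x))
          simpa [mul_assoc] using (h1.comp_ofReal.mul_const (c j)).const_mul
            (∏ i ∈ range n, (e - i))
        rw [hder.deriv]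
        refine Finset.sum_congr rfl fun j _ => ?_
        rw [prod_range_succ]
        have : e - (n + 1 : ℕ) = e - n - 1 := by push_cast; ring
        rw [this]
        ring
  -- all iterated derivatives vanish at the midpoint
  set x₀ : ℝ := (a + b) / 2 with hx₀
  have hx₀mem : x₀ ∈ Set.Ioo a b := ⟨by linarith, by linarith⟩
  have hzero : ∀ n : ℕ, iteratedDeriv n F x₀ = 0 := by
    intro n
    have hev : F =ᶠ[nhds x₀] fun _ => (0 : ℂ) := by
      filter_upwards [isOpen_Ioo.mem_nhds hx₀mem] with t ht
      exact h t ht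
    rw [hev.iteratedDeriv_eq n]
    have hz : ∀ k : ℕ, iteratedDeriv k (fun _ : ℝ => (0 : ℂ)) = fun _ => 0 := by
      intro k
      induction k with
      | zero => simp [iteratedDeriv_zero]
      | succ k ihk => rw [iteratedDeriv_succ, ihk]; funext t; simp
    rw [hz n]
  -- nonvanishing of the falling-factorial products
  have hprod : ∀ n : ℕ, (∏ i ∈ range n, (e - i)) ≠ 0 := by
    intro n
    apply Finset.prod_ne_zero_iff.mpr
    intro i _
    intro hcon
    have : (e - (i : ℂ)).re = 0 := by rw [hcon]; simp
    rw [he] at this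
    simp only [Complex.sub_re, Complex.neg_re, Complex.div_re] at this
    norm_num [Complex.natCast_re] at this
    nlinarith [Nat.cast_nonneg (α := ℝ) i]
  have hsum : ∀ n : ℕ, ∑ j, (((x₀ : ℂ) - y j) ^ (e - n)) * c j = 0 := by
    intro n
    have h0 := hzero n
    rw [key n x₀ hx₀mem] at h0
    have : (∏ i ∈ range n, (e - i)) * ∑ j, (((x₀ : ℂ) - y j) ^ (e - n)) * c j = 0 := by
      rw [Finset.mul_sum]
      rw [← h0]
      exact Finset.sum_congr rfl fun j _ => by ring
    exact (mul_eq_zero.mp this).resolve_left (hprod n)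
  -- Vandermonde step
  have hne : ∀ j, ((x₀ : ℂ) - y j) ≠ 0 := fun j => ne_zero_aux (hyim j) x₀
  have hcpne : ∀ j, ((x₀ : ℂ) - y j) ^ e ≠ 0 := by
    intro j hcon
    rcases (Complex.cpow_eq_zero_iff _ _).mp hcon with ⟨h1, _⟩
    exact hne j h1
  have hsplit : ∀ (n : ℕ) (j : Fin m),
      ((x₀ : ℂ) - y j) ^ (e - n)
        = ((x₀ : ℂ) - y j) ^ e * (((x₀ : ℂ) - y j)⁻¹) ^ n := by
    intro n j
    rw [Complex.cpow_sub _ _ (hne j), Complex.cpow_natCast, div_eq_mul_inv, inv_pow]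
  have hinj : Function.Injective (fun j => ((x₀ : ℂ) - y j)⁻¹) := by
    intro j₁ j₂ hjj
    apply hy
    have := inv_injective hjj
    linear_combination -this
  have hv : (fun j => ((x₀ : ℂ) - y j) ^ e * c j) = 0 := by
    apply Matrix.eq_zero_of_forall_pow_sum_mul_pow_eq_zero hinj
    intro i
    have := hsum (i : ℕ)
    rw [← this]
    refine Finset.sum_congr rfl fun j _ => ?_
    rw [hsplit (i : ℕ) j]
    ring
  intro j
  have := congrFun hv j
  simp only [Pi.zero_apply, mul_eq_zero] at this
  exact this.resolve_left (hcpne j)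

/-- If `x ↦ Σ_j A_j/(x - y_j)^{3/2}` vanishes on an open real interval, with the `y_j`
pairwise distinct in the upper half plane, then all coefficients `A_j` vanish. -/
theorem half_integer_power_vanishing
    (m : ℕ) (y : Fin m → ℂ) (hy : Function.Injective y) (hyim : ∀ j, 0 < (y j).im)
    (A : Fin m → EuclideanSpace ℂ (Fin 3))
    (a b : ℝ) (hab : a < b)
    (h : ∀ x ∈ Set.Ioo a b,
      ∑ j, ((((x : ℂ) - y j) ^ ((3 : ℂ) / 2))⁻¹) • A j = 0) :
    ∀ j, A j = 0 := by
  intro j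
  ext i
  have := scalar_vanishing m y hy hyim (fun j => A j i) a b hab ?_ j
  · simpa using this
  intro x hx
  have h0 := h x hx
  have h1 : ∑ j', ((((x : ℂ) - y j') ^ ((3 : ℂ) / 2))⁻¹) * A j' i = 0 := by
    have h2 := congrArg (EuclideanSpace.proj (𝕜 := ℂ) i) h0
    simpa [map_sum] using h2
  rw [← h1]
  refine Finset.sum_congr rfl fun j' _ => ?_
  rw [Complex.cpow_neg]
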